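/- Let R = C[x_0,...,x_n] with n ≥ 1, and let I_X be the defining ideal of a zero-dimensional subscheme X of P^n, with Y ⊆ X a zero-dimensional subscheme (so I_X ⊆ I_Y, both saturated ideals of height n). If H_{R/I_X}(d) = e(R/I_X) for some degree d, then H_{R/I_Y}(d) = e(R/I_Y). -/

import Mathlib

/-- The Hilbert function of `R/I` in degree `d`. -/
noncomputable def hilbertFn {k : Type*} [Field k] {m : ℕ}
    (I : Ideal (MvPolynomial (Fin m) k)) (d : ℕ) : ℕ :=
  Module.finrank k
    (↥(MvPolynomial.homogeneousSubmodule (Fin m) k d) ⧸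
      (Submodule.comap (MvPolynomial.homogeneousSubmodule (Fin m) k d).subtype
        (Submodule.restrictScalars k I)))

open MvPolynomial

section Avoid

variable {K V : Type*} [Field K] [Infinite K] [AddCommGroup V] [Module K V]

lemma avoid_subspaces (s : Finset (Submodule K V)) (h : ∀ W ∈ s, W ≠ ⊤) :
    ∃ v : V, ∀ W ∈ s, v ∉ W := by
  classical
  induction s using Finset.induction_on with
  | empty => exact ⟨0, by simp⟩
  | @insert a s ha IH =>
    obtain ⟨v, hv⟩ := IH fun W hW => h W (Finset.mem_insert_of_mem hW)
    have haT : a ≠ ⊤ := h a (Finset.mem_insert_self a s)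
    have : ∃ u : V, u ∉ a := by
      by_contra hu
      push_neg at hu
      exact haT (Submodule.eq_top_iff'.mpr hu)
    obtain ⟨u, hu⟩ := this
    by_cases hva : v ∈ a
    · -- use u + t • v for suitable t
      set f : Submodule K V → K := fun W =>
        if hW : ∃ t : K, u + t • v ∈ W then hW.choose else 0 with hf
      obtain ⟨t, ht⟩ := Infinite.exists_notMem_finset (s.image f)
      refine ⟨u + t • v, ?_⟩
      intro W hW
      rcases Finset.mem_insert.mp hW with rfl | hWs
      · intro hmem
        exact hu (by simpa using W.sub_mem hmem (W.smul_mem t hva))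
      · intro hmem
        have hex : ∃ t' : K, u + t' • v ∈ W := ⟨t, hmem⟩
        have ht0 : u + hex.choose • v ∈ W := hex.choose_spec
        have hne : t ≠ hex.choose := by
          rintro rfl
          exact ht (Finset.mem_image.mpr ⟨W, hWs, by rw [hf]; simp only [dif_pos hex]⟩)
        have hdiff : (t - hex.choose) • v ∈ W := by
          have := W.sub_mem hmem ht0
          simpa [sub_smul] using this
        have hvW : v ∈ W := by
          have := W.smul_mem (t - hex.choose)⁻¹ hdiff
          rwa [inv_smul_smul₀ (sub_ne_zero.mpr hne)] at this
        exact hv W hWs hvW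
    · exact ⟨v, fun W hW => by
        rcases Finset.mem_insert.mp hW with rfl | hWs
        · exact hva
        · exact hv W hWs⟩

end Avoid

open Submodule

section AssFinite

variable {R : Type*} [CommRing R] {M : Type*} [AddCommGroup M] [Module R M]

lemma assPrimes_subset_union [IsNoetherianRing R] (N : Submodule R M) :
    associatedPrimes R M ⊆ associatedPrimes R N ∪ associatedPrimes R (M ⧸ N) := by
  rintro p hp'
  obtain ⟨hp, x, hx⟩ := isAssociatedPrime_iff.mp hp'
  have hmem : ∀ r : R, r ∈ p ↔ r • x = 0 := fun r => by
    rw [hx, Submodule.mem_colon_singleton, Submodule.mem_bot]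
  by_cases h : ∀ r : R, r • x ∈ N → r • x = 0
  · right
    refine isAssociatedPrime_iff.mpr ⟨hp, Submodule.Quotient.mk x, ?_⟩
    ext r
    rw [Submodule.mem_colon_singleton, Submodule.mem_bot, hmem, ← Submodule.Quotient.mk_smul,
      Submodule.Quotient.mk_eq_zero]
    constructor
    · intro hr; rw [hr]; exact N.zero_mem
    · exact h r
  · left
    push_neg at h
    obtain ⟨r, hrN, hr0⟩ := h
    refine isAssociatedPrime_iff.mpr ⟨hp, ⟨r • x, hrN⟩, ?_⟩
    ext s
    rw [Submodule.mem_colon_singleton, Submodule.mem_bot, hmem]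
    constructor
    · intro hs
      apply Subtype.ext
      show s • (r • x) = 0
      rw [smul_comm, hs, smul_zero]
    · intro hs
      have h1 : s • (r • x) = 0 := congrArg Subtype.val hs
      have h2 : (s * r) • x = 0 := by rw [mul_smul]; exact h1
      rcases hp.mem_or_mem ((hmem (s * r)).mpr h2) with h3 | h3
      · exact (hmem s).mp h3
      · exact absurd ((hmem r).mp h3) hr0

lemma ass_span_singleton [IsNoetherianRing R] (x : M) {p : Ideal R} (hp : p.IsPrime)
    (hx : p = (R ∙ x).annihilator) :
    associatedPrimes R ↥(R ∙ x) ⊆ {p} := by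
  have hker : LinearMap.ker (LinearMap.toSpanSingleton R M x) = p := by
    ext r
    rw [LinearMap.mem_ker, hx, Submodule.mem_annihilator_span_singleton]
    rfl
  have e : (R ⧸ p) ≃ₗ[R] ↥(R ∙ x) := by
    rw [← hker]
    exact (LinearMap.toSpanSingleton R M x).quotKerEquivRange.trans
      (LinearEquiv.ofEq _ _ (LinearMap.span_singleton_eq_range R M x).symm)
  rw [← LinearEquiv.AssociatedPrimes.eq e,
    associatedPrimes.eq_singleton_of_isPrimary hp.isPrimary, hp.radical]

theorem ass_finite [IsNoetherianRing R] [IsNoetherian R M] :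
    (associatedPrimes R M).Finite := by
  have key : ∀ N : Submodule R M, (associatedPrimes R (M ⧸ N)).Finite := by
    intro N
    induction N using IsNoetherian.induction with
    | _ N IH =>
      by_cases htriv : Subsingleton (M ⧸ N)
      · rw [associatedPrimes.eq_empty_of_subsingleton]
        exact Set.finite_empty
      · have : Nontrivial (M ⧸ N) := not_subsingleton_iff_nontrivial.mp htriv
        obtain ⟨p, hp'⟩ := associatedPrimes.nonempty R (M ⧸ N)
        obtain ⟨hprime, z, hz⟩ := isAssociatedPrime_iff.mp hp'
        have hz0 : z ≠ 0 := by
          rintro rfl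
          rw [Submodule.bot_colon', Submodule.span_singleton_eq_bot.mpr rfl, Submodule.annihilator_bot] at hz
          exact hprime.ne_top hz
        obtain ⟨x, rfl⟩ := Submodule.Quotient.mk_surjective N z
        have hxN : x ∉ N := fun hxN => hz0 ((Submodule.Quotient.mk_eq_zero N).mpr hxN)
        have hlt : N < N ⊔ R ∙ x := by
          refine lt_of_le_of_ne le_sup_left fun h => hxN ?_
          rw [h]
          exact Submodule.mem_sup_right (Submodule.mem_span_singleton_self x)
        have hmap : Submodule.map N.mkQ (N ⊔ R ∙ x) = R ∙ (Submodule.Quotient.mk x : M ⧸ N) := by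
          rw [Submodule.map_sup, Submodule.map_span, Set.image_singleton]
          have h1 : Submodule.map N.mkQ N = ⊥ := by
            rw [eq_bot_iff]
            rintro y ⟨w, hw, rfl⟩
            simpa [Submodule.Quotient.mk_eq_zero] using hw
          rw [h1, bot_sup_eq]
          rfl
        have h2 : associatedPrimes R ((M ⧸ N) ⧸ (R ∙ (Submodule.Quotient.mk x : M ⧸ N)))
            = associatedPrimes R (M ⧸ (N ⊔ R ∙ x)) := by
          refine LinearEquiv.AssociatedPrimes.eq ?_
          exact (Submodule.quotEquivOfEq _ _ hmap.symm).trans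
            (Submodule.quotientQuotientEquivQuotient N (N ⊔ R ∙ x) le_sup_left)
        refine Set.Finite.subset (Set.Finite.union (Set.finite_singleton p) (IH _ hlt)) ?_
        intro q hq
        rcases assPrimes_subset_union (R ∙ (Submodule.Quotient.mk x : M ⧸ N)) hq with h | h
        · exact Or.inl (ass_span_singleton _ hprime (hz.trans Submodule.bot_colon') h)
        · exact Or.inr (h2 ▸ h)
  have := key ⊥
  rwa [LinearEquiv.AssociatedPrimes.eq (Submodule.quotEquivOfEqBot ⊥ rfl)] at this

end AssFinite


lemma exists_nzd {n : ℕ} (I : Ideal (MvPolynomial (Fin (n + 1)) ℂ))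
    (hsat : I.colon ((Ideal.span (Set.range MvPolynomial.X) :
      Ideal (MvPolynomial (Fin (n + 1)) ℂ)) : Set (MvPolynomial (Fin (n + 1)) ℂ)) = I) :
    ∃ ℓ ∈ homogeneousSubmodule (Fin (n + 1)) ℂ 1, ∀ f, ℓ * f ∈ I → f ∈ I := by
  classical
  set R := MvPolynomial (Fin (n + 1)) ℂ
  haveI : IsNoetherian R (R ⧸ I) := inferInstance
  have hA : (associatedPrimes R (R ⧸ I)).Finite := ass_finite
  -- every associated prime misses some X j
  have hX : ∀ p ∈ associatedPrimes R (R ⧸ I), ∃ j, MvPolynomial.X j ∉ p := by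
    rintro p hp'
    obtain ⟨hp, z, hz⟩ := isAssociatedPrime_iff.mp hp'
    have hz' : ∀ r : R, r ∈ p ↔ r • z = 0 := fun r => by
      rw [hz, Submodule.mem_colon_singleton, Submodule.mem_bot]
    by_contra hall
    push_neg at hall
    obtain ⟨f, rfl⟩ := Submodule.Quotient.mk_surjective (I.restrictScalars R) z
    have hz0 : (Submodule.Quotient.mk f : R ⧸ I) ≠ 0 := by
      rintro h
      exact hp.ne_top ((Ideal.eq_top_iff_one _).mpr ((hz' 1).mpr ((one_smul R _).trans h)))
    have hfI : f ∉ I := fun hf => hz0 ((Submodule.Quotient.mk_eq_zero _).mpr hf)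
    apply hfI
    rw [← hsat]
    rw [Submodule.mem_colon]
    intro g hg
    induction hg using Submodule.span_induction with
    | mem g hgmem =>
      obtain ⟨j, rfl⟩ := hgmem
      have hj := hall j
      rw [hz'] at hj
      replace hj : Submodule.Quotient.mk (p := I.restrictScalars R) (MvPolynomial.X j • f) = 0 := hj
      have hm' : MvPolynomial.X j • f ∈ I := (Submodule.Quotient.mk_eq_zero _).mp hj
      have hm : MvPolynomial.X j * f ∈ I := by rwa [smul_eq_mul] at hm'
      show f • MvPolynomial.X j ∈ I
      rwa [smul_eq_mul, mul_comm]
    | zero => simpa using I.zero_mem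
    | add g₁ g₂ _ _ h1 h2 => rw [smul_add]; exact I.add_mem h1 h2
    | smul r g _ h1 =>
      rw [smul_comm]
      exact Ideal.mul_mem_left _ _ h1
  -- choose ℓ
  set H1 := homogeneousSubmodule (Fin (n + 1)) ℂ 1
  set W : Ideal R → Submodule ℂ ↥H1 := fun p =>
    Submodule.comap H1.subtype (Submodule.restrictScalars ℂ p) with hW
  have hWs : ∀ p ∈ hA.toFinset, W p ≠ ⊤ := by
    intro p hp
    rw [Set.Finite.mem_toFinset] at hp
    obtain ⟨j, hj⟩ := hX p hp
    intro htop
    have : (⟨MvPolynomial.X j, (mem_homogeneousSubmodule _ _).mpr (isHomogeneous_X _ _)⟩ : ↥H1)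
        ∈ W p := htop ▸ Submodule.mem_top
    exact hj this
  obtain ⟨v, hv⟩ := avoid_subspaces (hA.toFinset.image W) (by
    rintro Wp hWp
    obtain ⟨p, hp, rfl⟩ := Finset.mem_image.mp hWp
    exact hWs p hp)
  refine ⟨(v : R), v.2, ?_⟩
  intro f hf
  by_contra hfI
  have hz0 : (Submodule.Quotient.mk f : R ⧸ I) ≠ 0 :=
    fun h => hfI ((Submodule.Quotient.mk_eq_zero _).mp h)
  have hzd : (v : R) ∈ { r : R | ∃ x : R ⧸ I, x ≠ 0 ∧ r • x = 0 } := by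
    refine ⟨Submodule.Quotient.mk f, hz0, ?_⟩
    rw [← Submodule.Quotient.mk_smul, smul_eq_mul]
    exact (Submodule.Quotient.mk_eq_zero _).mpr hf
  rw [← biUnion_associatedPrimes_eq_zero_divisors] at hzd
  obtain ⟨p, hp, hvp⟩ := Set.mem_iUnion₂.mp hzd
  exact hv (W p) (Finset.mem_image_of_mem W (hA.mem_toFinset.mpr hp)) hvp

open MvPolynomial

noncomputable section HilbSetup

variable {m : ℕ}

local notation "R" => MvPolynomial (Fin m) ℂ
local notation "H" d => homogeneousSubmodule (Fin m) ℂ d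

instance fdH (d : ℕ) : FiniteDimensional ℂ ↥(H d) := by
  have hle : (H d) ≤ restrictTotalDegree (Fin m) ℂ d := fun p hp =>
    (mem_restrictTotalDegree _ _ _).mpr
      (MvPolynomial.IsHomogeneous.totalDegree_le ((mem_homogeneousSubmodule _ _).mp hp))
  haveI : FiniteDimensional ℂ ↥(restrictTotalDegree (Fin m) ℂ d) := by
    have : Module.Finite ℂ ↥(restrictTotalDegree (Fin m) ℂ d) := inferInstance
    exact this
  exact Module.Finite.equiv (Submodule.comapSubtypeEquivOfLe hle)

/-- The degree-`d` part of `I` inside the homogeneous component. -/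
def Sd (I : Ideal R) (d : ℕ) : Submodule ℂ ↥(H d) :=
  Submodule.comap (H d).subtype (Submodule.restrictScalars ℂ I)

/-- Multiplication by a linear form as a map between homogeneous components. -/
def mulMap {ℓ : R} (hℓ : ℓ ∈ (H 1)) (d : ℕ) : ↥(H d) →ₗ[ℂ] ↥(H (d + 1)) where
  toFun f := ⟨ℓ * f, by
    rw [mem_homogeneousSubmodule]
    have := ((mem_homogeneousSubmodule _ _).mp hℓ).mul ((mem_homogeneousSubmodule _ _).mp f.2)
    rwa [add_comm] at this⟩
  map_add' f g := by ext; simp [mul_add]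
  map_smul' c f := by ext; simp [Algebra.mul_smul_comm]

lemma mulMap_cond {ℓ : R} (hℓ : ℓ ∈ (H 1)) (I : Ideal R) (d : ℕ) :
    Sd I d ≤ Submodule.comap (mulMap hℓ d) (Sd I (d + 1)) := by
  intro f hf
  exact Ideal.mul_mem_left _ ℓ hf

/-- The induced map on quotients. -/
def qMap {ℓ : R} (hℓ : ℓ ∈ (H 1)) (I : Ideal R) (d : ℕ) :
    (↥(H d) ⧸ Sd I d) →ₗ[ℂ] (↥(H (d + 1)) ⧸ Sd I (d + 1)) :=
  Submodule.mapQ _ _ (mulMap hℓ d) (mulMap_cond hℓ I d)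

lemma qMap_injective {ℓ : R} (hℓ : ℓ ∈ (H 1)) (I : Ideal R)
    (hnzd : ∀ f, ℓ * f ∈ I → f ∈ I) (d : ℕ) : Function.Injective (qMap hℓ I d) := by
  rw [← LinearMap.ker_eq_bot, eq_bot_iff]
  intro x hx
  obtain ⟨f, rfl⟩ := Submodule.Quotient.mk_surjective _ x
  rw [LinearMap.mem_ker, qMap, Submodule.mapQ_apply, Submodule.Quotient.mk_eq_zero] at hx
  rw [Submodule.mem_bot, Submodule.Quotient.mk_eq_zero]
  exact hnzd (f : R) hx

lemma hilbert_eq (I : Ideal R) (d : ℕ) :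
    Module.finrank ℂ
      (↥(homogeneousSubmodule (Fin m) ℂ d) ⧸
        (Submodule.comap (homogeneousSubmodule (Fin m) ℂ d).subtype
          (Submodule.restrictScalars ℂ I))) = Module.finrank ℂ (↥(H d) ⧸ Sd I d) := rfl

lemma hilbert_mono {ℓ : R} (hℓ : ℓ ∈ (H 1)) (I : Ideal R)
    (hnzd : ∀ f, ℓ * f ∈ I → f ∈ I) (d : ℕ) :
    Module.finrank ℂ (↥(H d) ⧸ Sd I d) ≤ Module.finrank ℂ (↥(H (d+1)) ⧸ Sd I (d+1)) :=
  LinearMap.finrank_le_finrank_of_injective (qMap_injective hℓ I hnzd d)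

/-- The `d`-th graded piece of `I_Y / I_X`. -/
def cD (IX IY : Ideal R) (d : ℕ) : ℕ :=
  Module.finrank ℂ ↥(Submodule.map (Sd IX d).mkQ (Sd IY d))

lemma hilbert_split (IX IY : Ideal R) (hXY : IX ≤ IY) (d : ℕ) :
    Module.finrank ℂ (↥(H d) ⧸ Sd IX d)
      = cD IX IY d + Module.finrank ℂ (↥(H d) ⧸ Sd IY d) := by
  have hle : Sd IX d ≤ Sd IY d := fun f hf => hXY hf
  have e := Submodule.quotientQuotientEquivQuotient (Sd IX d) (Sd IY d) hle
  have h1 := Submodule.finrank_quotient_add_finrank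
    (Submodule.map (Sd IX d).mkQ (Sd IY d))
  rw [LinearEquiv.finrank_eq e] at h1
  rw [← h1, cD, add_comm]

lemma cD_mono {ℓ : R} (hℓ : ℓ ∈ (H 1)) (IX IY : Ideal R) (hXY : IX ≤ IY)
    (hnzd : ∀ f, ℓ * f ∈ IX → f ∈ IX) (d : ℕ) :
    cD IX IY d ≤ cD IX IY (d + 1) := by
  have hq := qMap_injective hℓ IX hnzd d
  have e := Submodule.equivMapOfInjective _ hq (Submodule.map (Sd IX d).mkQ (Sd IY d))
  rw [cD, cD, LinearEquiv.finrank_eq e]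
  apply Submodule.finrank_mono
  rintro _ ⟨_, ⟨f, hf, rfl⟩, rfl⟩
  refine ⟨mulMap hℓ d f, Ideal.mul_mem_left _ ℓ hf, ?_⟩
  rw [qMap, Submodule.mkQ_apply, Submodule.mkQ_apply, Submodule.mapQ_apply]

end HilbSetup

/-- Lemma 2.10(3): if `X ⊆ P^n` is a zero-dimensional subscheme (saturated homogeneous
ideal `I_X` with `dim R/I_X = 1`) which is multiplicity `d`-independent
(`H_{R/I_X}(d) = e(R/I_X)`, where the multiplicity is the eventual value of the Hilbert
function), then so is every zero-dimensional subscheme `Y ⊆ X`. -/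
theorem stmt5 (n : ℕ) (hn : 1 ≤ n)
    (IX IY : Ideal (MvPolynomial (Fin (n + 1)) ℂ))
    (hXY : IX ≤ IY)
    (hIXhom : ∀ f ∈ IX, ∀ i : ℕ, MvPolynomial.homogeneousComponent i f ∈ IX)
    (hIYhom : ∀ f ∈ IY, ∀ i : ℕ, MvPolynomial.homogeneousComponent i f ∈ IY)
    (hsatX : IX.colon ((Ideal.span (Set.range MvPolynomial.X) :
      Ideal (MvPolynomial (Fin (n + 1)) ℂ)) : Set (MvPolynomial (Fin (n + 1)) ℂ)) = IX)
    (hsatY : IY.colon ((Ideal.span (Set.range MvPolynomial.X) :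
      Ideal (MvPolynomial (Fin (n + 1)) ℂ)) : Set (MvPolynomial (Fin (n + 1)) ℂ)) = IY)
    (hdimX : ringKrullDim (MvPolynomial (Fin (n + 1)) ℂ ⧸ IX) = 1)
    (hdimY : ringKrullDim (MvPolynomial (Fin (n + 1)) ℂ ⧸ IY) = 1)
    (eX eY : ℕ)
    (heX : ∀ᶠ d in Filter.atTop, hilbertFn IX d = eX)
    (heY : ∀ᶠ d in Filter.atTop, hilbertFn IY d = eY)
    (d : ℕ) (hd : hilbertFn IX d = eX) :
    hilbertFn IY d = eY := by
  obtain ⟨lX, hlX, hnzdX⟩ := exists_nzd IX hsatX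
  obtain ⟨lY, hlY, hnzdY⟩ := exists_nzd IY hsatY
  have hmonoY : Monotone (fun d => hilbertFn IY d) :=
    monotone_nat_of_le_succ (fun d => hilbert_mono hlY IY hnzdY d)
  have hmonoC : Monotone (cD IX IY) :=
    monotone_nat_of_le_succ (cD_mono hlX IX IY hXY hnzdX)
  have hsplit : ∀ D : ℕ, hilbertFn IX D = cD IX IY D + hilbertFn IY D :=
    fun D => hilbert_split IX IY hXY D
  obtain ⟨N, hN⟩ := Filter.eventually_atTop.mp (heX.and heY)
  set D := max N d with hDdef
  have hD := hN D (le_max_left _ _)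
  have h1 : eX = cD IX IY D + eY := by rw [← hD.1, ← hD.2]; exact hsplit D
  have h2 : hilbertFn IY d ≤ hilbertFn IY D := hmonoY (le_max_right N d)
  have h2' : hilbertFn IY d ≤ eY := hD.2 ▸ h2
  have h3 : cD IX IY d ≤ cD IX IY D := hmonoC (le_max_right N d)
  have h4 : eX = cD IX IY d + hilbertFn IY d := by rw [← hd]; exact hsplit d
  omega
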